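/- For every branch decomposition (Y,b) of a graph G and every graph with sources Γ = (G,X), there exists a recursive branch decomposition T of Γ with width(T) ≤ width(Y,b) + |X|. -/

import Mathlib

open CategoryTheory MonoidalCategory

namespace MWidth

section


variable {V E : Type}

/-- every edge has one or two endpoints -/
def EndsSmall (ends : E → Set V) : Prop := ∀ e, ∃ u w : V, ends e = {u, w}

/-! ### Tree decompositions (Robertson–Seymour style) -/

structure TreeDec (ends : E → Set V) (ι : Type) where
  Y : SimpleGraph ι
  conn : Y.Connected
  acyc : Y.IsAcyclic
  t : ι → Set V
  cover : ∀ v : V, ∃ i, v ∈ t i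
  edge : ∀ e : E, ∃ i, ends e ⊆ t i
  sep : ∀ ⦃i j k : ι⦄ (p : Y.Walk i k), p.IsPath → j ∈ p.support → t i ∩ t k ⊆ t j

noncomputable def TreeDec.width {ends : E → Set V} {ι : Type} (D : TreeDec ends ι) : ℕ :=
  ⨆ i, (D.t i).ncard

/-! ### Recursive tree decompositions -/

inductive RTree (V : Type) where
  | nil : RTree V
  | node : RTree V → Set V → RTree V → RTree V

namespace RTree

noncomputable def width : RTree V → ℕ
  | nil => 0
  | node T1 W T2 => max W.ncard (max T1.width T2.width)

def label : RTree V → Set V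
  | nil => ∅
  | node _ W _ => W

inductive Subtree : RTree V → RTree V → Prop
  | refl (T : RTree V) : Subtree T T
  | left {T' T1 T2 : RTree V} {W : Set V} : Subtree T' T1 → Subtree T' (node T1 W T2)
  | right {T' T1 T2 : RTree V} {W : Set V} : Subtree T' T2 → Subtree T' (node T1 W T2)

end RTree

/-- `IsRTD ends vs es X T` : `T` is a recursive tree decomposition of the graph with
sources `((vs,es),X)` living inside the ambient graph `(V,E,ends)`. -/
def IsRTD (ends : E → Set V) : Set V → Set E → Set V → RTree V → Prop
  | vs, es, _, .nil => vs = ∅ ∧ es = ∅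
  | vs, es, X, .node T1 W T2 =>
      W.Nonempty ∧ W ⊆ vs ∧ X ⊆ W ∧
      ∃ (vs1 vs2 : Set V) (es1 es2 : Set E),
        vs1 ⊆ vs ∧ vs2 ⊆ vs ∧ es1 ⊆ es ∧ es2 ⊆ es ∧
        (∀ e ∈ es1, ends e ⊆ vs1) ∧ (∀ e ∈ es2, ends e ⊆ vs2) ∧
        W ∪ vs1 ∪ vs2 = vs ∧ es1 ∩ es2 = ∅ ∧ vs1 ∩ vs2 ⊆ W ∧
        (∀ e ∈ es \ (es1 ∪ es2), ends e ⊆ W) ∧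
        IsRTD ends vs1 es1 (vs1 ∩ W) T1 ∧ IsRTD ends vs2 es2 (vs2 ∩ W) T2

/-! ### Path decompositions -/

def IsPathDec (ends : E → Set V) (L : List (Set V)) : Prop :=
  (∀ v : V, ∃ W ∈ L, v ∈ W) ∧ (∀ e : E, ∃ W ∈ L, ends e ⊆ W) ∧
    ∀ i j k : ℕ, i ≤ j → j ≤ k → k < L.length →
      L.getD i ∅ ∩ L.getD k ∅ ⊆ L.getD j ∅

/-- width of a list of bags (used both for path decompositions and recursive
path decompositions) -/
noncomputable def pdWidth : List (Set V) → ℕ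
  | [] => 0
  | W :: L => max W.ncard (pdWidth L)

/-- `IsRPD ends vs es X L` : `L` is a recursive path decomposition of `((vs,es),X)`. -/
def IsRPD (ends : E → Set V) : Set V → Set E → Set V → List (Set V) → Prop
  | vs, es, _, [] => vs = ∅ ∧ es = ∅
  | vs, es, X, V1 :: L =>
      V1.Nonempty ∧ V1 ⊆ vs ∧ X ⊆ V1 ∧
      ∃ (vs' : Set V) (es' : Set E),
        vs' ⊆ vs ∧ es' ⊆ es ∧ (∀ e ∈ es', ends e ⊆ vs') ∧
        V1 ∪ vs' = vs ∧ (∀ e ∈ es \ es', ends e ⊆ V1) ∧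
        IsRPD ends vs' es' (V1 ∩ vs') L

/-! ### Branch decompositions -/

/-- binary trees whose nodes are labelled by subgraphs-with-sources `(vs,es,X)` -/
inductive BT (V E : Type) where
  | nil : BT V E
  | leaf : Set V → Set E → Set V → BT V E
  | node : BT V E → Set V → Set E → Set V → BT V E → BT V E

namespace BT

noncomputable def width : BT V E → ℕ
  | nil => 0
  | leaf _ _ X => X.ncard
  | node T1 _ _ X T2 => max X.ncard (max T1.width T2.width)

def labelV : BT V E → Set V
  | nil => ∅
  | leaf vs _ _ => vs
  | node _ vs _ _ _ => vs

def labelX : BT V E → Set V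
  | nil => ∅
  | leaf _ _ X => X
  | node _ _ _ X _ => X

inductive Subtree : BT V E → BT V E → Prop
  | refl (T : BT V E) : Subtree T T
  | left {T' T1 T2 : BT V E} {vs X : Set V} {es : Set E} :
      Subtree T' T1 → Subtree T' (node T1 vs es X T2)
  | right {T' T1 T2 : BT V E} {vs X : Set V} {es : Set E} :
      Subtree T' T2 → Subtree T' (node T1 vs es X T2)

end BT

/-- `IsRBD ends vs es X T` : `T` is a recursive branch decomposition of `((vs,es),X)`. -/
def IsRBD (ends : E → Set V) : Set V → Set E → Set V → BT V E → Prop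
  | _, es, _, .nil => es = ∅
  | vs, es, X, .leaf vs' es' X' => vs' = vs ∧ es' = es ∧ X' = X ∧ ∃ e, es = {e}
  | vs, es, X, .node T1 vs' es' X' T2 =>
      vs' = vs ∧ es' = es ∧ X' = X ∧
      ∃ (vs1 vs2 : Set V) (es1 es2 : Set E),
        vs1 ⊆ vs ∧ vs2 ⊆ vs ∧
        (∀ e ∈ es1, ends e ⊆ vs1) ∧ (∀ e ∈ es2, ends e ⊆ vs2) ∧
        es1 ∪ es2 = es ∧ es1 ∩ es2 = ∅ ∧ vs1 ∪ vs2 = vs ∧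
        IsRBD ends vs1 es1 ((vs1 ∩ vs2) ∪ (X ∩ vs1)) T1 ∧
        IsRBD ends vs2 es2 ((vs1 ∩ vs2) ∪ (X ∩ vs2)) T2

/-- branch decompositions: subcubic trees with leaves in bijection with the edges -/
structure BranchDec (E ι : Type) where
  Y : SimpleGraph ι
  conn : Y.Connected
  acyc : Y.IsAcyclic
  subcubic : ∀ i : ι, (Y.neighborSet i).ncard ≤ 3
  b : {i : ι // (Y.neighborSet i).ncard = 1} ≃ E

/-- the edges of `G` on the `u`-side of the edge `{u,w}` of the decomposition tree -/
def BranchDec.side {E ι : Type} (D : BranchDec E ι) (u w : ι) : Set E :=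
  { e | ∃ l : {i : ι // (D.Y.neighborSet i).ncard = 1},
      (D.Y.deleteEdges {s(u, w)}).Reachable u l.1 ∧ D.b l = e }

def edgeEnds (ends : E → Set V) (A : Set E) : Set V := ⋃ e ∈ A, ends e

noncomputable def BranchDec.order (ends : E → Set V) {ι : Type} (D : BranchDec E ι)
    (u w : ι) : ℕ :=
  (edgeEnds ends (D.side u w) ∩ edgeEnds ends (D.side w u)).ncard

noncomputable def BranchDec.bwidth (ends : E → Set V) {ι : Type} (D : BranchDec E ι) : ℕ :=
  ⨆ p : {p : ι × ι // D.Y.Adj p.1 p.2}, D.order ends p.1.1 p.1.2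

/-! ### min-max widths -/

noncomputable def treewidth (ends : E → Set V) : ℕ :=
  sInf { n | ∃ (ι : Type) (_ : Finite ι) (D : TreeDec ends ι), D.width = n }

noncomputable def pathwidth (ends : E → Set V) : ℕ :=
  sInf { n | ∃ L : List (Set V), IsPathDec ends L ∧ pdWidth L = n }

noncomputable def branchwidth (ends : E → Set V) : ℕ :=
  sInf { n | ∃ (ι : Type) (_ : Fintype ι) (D : BranchDec E ι), D.bwidth ends = n }

end

section Aux

open SimpleGraph

variable {V E ι : Type}

lemma edgeEnds_mono (ends : E → Set V) {A B : Set E} (h : A ⊆ B) :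
    edgeEnds ends A ⊆ edgeEnds ends B := by
  intro v hv
  simp only [edgeEnds, Set.mem_iUnion] at *
  obtain ⟨e, he, hv⟩ := hv
  exact ⟨e, h he, hv⟩

lemma edgeEnds_union (ends : E → Set V) (A B : Set E) :
    edgeEnds ends (A ∪ B) = edgeEnds ends A ∪ edgeEnds ends B := by
  ext v
  simp only [edgeEnds, Set.mem_iUnion, Set.mem_union]
  constructor
  · rintro ⟨e, he | he, hv⟩
    · exact Or.inl ⟨e, he, hv⟩
    · exact Or.inr ⟨e, he, hv⟩
  · rintro (⟨e, he, hv⟩ | ⟨e, he, hv⟩)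
    · exact ⟨e, Or.inl he, hv⟩
    · exact ⟨e, Or.inr he, hv⟩

lemma ends_subset_edgeEnds (ends : E → Set V) {A : Set E} {e : E} (he : e ∈ A) :
    ends e ⊆ edgeEnds ends A := by
  intro v hv
  simp only [edgeEnds, Set.mem_iUnion]
  exact ⟨e, he, hv⟩

lemma sym2_ne {a b c : ι} (h1 : b ≠ c) (h2 : a ≠ c) : s(a, b) ≠ s(a, c) := by
  intro h
  rcases Sym2.eq_iff.mp h with ⟨-, h⟩ | ⟨h, -⟩
  · exact h1 h
  · exact h2 h

lemma not_reach (D : BranchDec E ι) {u w : ι} (h : D.Y.Adj u w) :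
    ¬ (D.Y.deleteEdges {s(u, w)}).Reachable u w := by
  have hb := (isAcyclic_iff_forall_adj_isBridge.mp D.acyc h)
  rw [isBridge_iff] at hb
  exact hb

lemma reach_or (D : BranchDec E ι) {u w : ι} (h : D.Y.Adj u w) (x : ι) :
    (D.Y.deleteEdges {s(u, w)}).Reachable u x ∨
      (D.Y.deleteEdges {s(u, w)}).Reachable w x := by
  have key : ∀ {a b : ι} (_ : D.Y.Walk a b),
      ((D.Y.deleteEdges {s(u, w)}).Reachable u a ∨
        (D.Y.deleteEdges {s(u, w)}).Reachable w a) →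
      ((D.Y.deleteEdges {s(u, w)}).Reachable u b ∨
        (D.Y.deleteEdges {s(u, w)}).Reachable w b) := by
    intro a b p
    induction p with
    | nil => exact id
    | cons h' q ih =>
      rename_i a c b
      intro hab
      apply ih
      by_cases he : s(a, c) = s(u, w)
      · rcases Sym2.eq_iff.mp he with ⟨-, rfl⟩ | ⟨-, rfl⟩
        · exact Or.inr (Reachable.refl _)
        · exact Or.inl (Reachable.refl _)
      · have hadj : (D.Y.deleteEdges {s(u, w)}).Adj a c :=
          deleteEdges_adj.mpr ⟨h', by simpa using he⟩
        exact hab.imp (fun hr => hr.trans hadj.reachable) (fun hr => hr.trans hadj.reachable)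
  obtain ⟨p⟩ := D.conn.preconnected u x
  exact key p (Or.inl (Reachable.refl _))

lemma reach_transfer (D : BranchDec E ι) {u w w' : ι} (huw : D.Y.Adj u w)
    (huw' : D.Y.Adj u w') (hne : w' ≠ w) {x : ι}
    (hx : (D.Y.deleteEdges {s(w', u)}).Reachable w' x) :
    (D.Y.deleteEdges {s(u, w)}).Reachable u x := by
  classical
  obtain ⟨q⟩ := hx
  have hu : u ∉ q.support := by
    intro hmem
    exact not_reach D huw'.symm ⟨q.takeUntil u hmem⟩
  have hq1 : ∀ e ∈ q.edges, e ∈ D.Y.edgeSet := by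
    intro e he
    have := q.edges_subset_edgeSet he
    rw [edgeSet_deleteEdges] at this
    exact this.1
  have hq2 : ∀ e ∈ (q.transfer D.Y hq1).edges, e ∉ ({s(u, w)} : Set (Sym2 ι)) := by
    intro e he hm
    rw [Set.mem_singleton_iff] at hm
    subst hm
    rw [Walk.edges_transfer] at he
    exact hu (q.fst_mem_support_of_mem_edges he)
  refine ⟨Walk.cons ?_ ((q.transfer D.Y hq1).toDeleteEdges _ hq2)⟩
  exact deleteEdges_adj.mpr ⟨huw', by simpa using sym2_ne hne huw.ne⟩

lemma side_subset (D : BranchDec E ι) {u w w' : ι} (huw : D.Y.Adj u w)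
    (huw' : D.Y.Adj u w') (hne : w' ≠ w) : D.side w' u ⊆ D.side u w := by
  rintro e ⟨l, hl, rfl⟩
  exact ⟨l, reach_transfer D huw huw' hne hl, rfl⟩

lemma reach_lt (D : BranchDec E ι) [Fintype ι] {u w w' : ι} (huw : D.Y.Adj u w)
    (huw' : D.Y.Adj u w') (hne : w' ≠ w) :
    ({x | (D.Y.deleteEdges {s(w', u)}).Reachable w' x}).ncard <
      ({x | (D.Y.deleteEdges {s(u, w)}).Reachable u x}).ncard := by
  apply Set.ncard_lt_ncard _ (Set.toFinite _)
  rw [Set.ssubset_def]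
  constructor
  · exact fun x hx => reach_transfer D huw huw' hne hx
  · intro hsub
    exact not_reach D huw'.symm (hsub (Set.mem_setOf.mpr (Reachable.refl u)))

lemma side_union_compl (D : BranchDec E ι) {u w : ι} (huw : D.Y.Adj u w) :
    D.side u w ∪ D.side w u = Set.univ := by
  apply Set.eq_univ_of_forall
  intro e
  rcases reach_or D huw (D.b.symm e).1 with h | h
  · exact Or.inl ⟨D.b.symm e, h, D.b.apply_symm_apply e⟩
  · refine Or.inr ⟨D.b.symm e, ?_, D.b.apply_symm_apply e⟩
    rwa [Sym2.eq_swap (a := w)]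

lemma side_inter_compl (D : BranchDec E ι) {u w : ι} (huw : D.Y.Adj u w) :
    D.side u w ∩ D.side w u = ∅ := by
  ext e
  simp only [Set.mem_inter_iff, Set.mem_empty_iff_false, iff_false, not_and]
  rintro ⟨l1, h1, he1⟩ ⟨l2, h2, he2⟩
  have hl : l2 = l1 := D.b.injective (he2.trans he1.symm)
  subst hl
  rw [Sym2.eq_swap (a := w)] at h2
  exact not_reach D huw (h1.trans h2.symm)

lemma side_compl (D : BranchDec E ι) {u w : ι} (huw : D.Y.Adj u w) :
    (D.side u w)ᶜ = D.side w u := by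
  ext e
  simp only [Set.mem_compl_iff]
  constructor
  · intro h
    rcases (Set.eq_univ_iff_forall.mp (side_union_compl D huw) e) with h' | h'
    · exact absurd h' h
    · exact h'
  · intro h hmem
    have := side_inter_compl D huw
    rw [Set.eq_empty_iff_forall_notMem] at this
    exact this e ⟨hmem, h⟩

lemma reach_of_leaf (D : BranchDec E ι) {u w x : ι} (hN : D.Y.neighborSet u = {w})
    (h : (D.Y.deleteEdges {s(u, w)}).Reachable u x) : x = u := by
  obtain ⟨p⟩ := h
  cases p with
  | nil => rfl
  | cons h q =>
    exfalso
    rename_i y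
    rw [deleteEdges_adj] at h
    have hy : y ∈ D.Y.neighborSet u := h.1
    rw [hN, Set.mem_singleton_iff] at hy
    subst hy
    exact h.2 (Set.mem_singleton _)

lemma side_leaf (D : BranchDec E ι) {u w : ι} (huw : D.Y.Adj u w)
    (hN : D.Y.neighborSet u = {w}) :
    ∃ e : E, D.side u w = {e} := by
  have h1 : (D.Y.neighborSet u).ncard = 1 := by rw [hN]; exact Set.ncard_singleton w
  refine ⟨D.b ⟨u, h1⟩, ?_⟩
  ext e
  constructor
  · rintro ⟨l, hr, rfl⟩
    have hl : l.1 = u := reach_of_leaf D hN hr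
    have : l = ⟨u, h1⟩ := Subtype.ext hl
    rw [this]
    rfl
  · rintro rfl
    exact ⟨⟨u, h1⟩, Reachable.refl _, rfl⟩

lemma side_step (D : BranchDec E ι) {u w : ι} (huw : D.Y.Adj u w)
    (hN : D.Y.neighborSet u ≠ {w}) {e : E} (he : e ∈ D.side u w) :
    ∃ w', D.Y.Adj u w' ∧ w' ≠ w ∧ e ∈ D.side w' u := by
  classical
  obtain ⟨l, hr, hbe⟩ := he
  obtain ⟨lv, hl1⟩ := l
  obtain ⟨p0⟩ := hr
  have hp : p0.bypass.IsPath := p0.bypass_isPath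
  generalize p0.bypass = p at hp
  cases p with
  | nil =>
    exfalso
    apply hN
    have hl1' : (D.Y.neighborSet lv).ncard = 1 := hl1
    obtain ⟨a, ha⟩ := Set.ncard_eq_one.mp hl1'
    have hw : w ∈ D.Y.neighborSet lv := huw
    rw [ha, Set.mem_singleton_iff] at hw
    show D.Y.neighborSet lv = {w}
    rw [ha, hw]
  | cons h q =>
    rename_i y
    rw [Walk.cons_isPath_iff] at hp
    rw [deleteEdges_adj] at h
    have hyw : y ≠ w := by
      intro hcon
      subst hcon
      exact h.2 (Set.mem_singleton _)
    refine ⟨y, h.1, hyw, ⟨⟨lv, hl1⟩, ?_, hbe⟩⟩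
    have hq1 : ∀ e' ∈ q.edges, e' ∈ (D.Y.deleteEdges {s(y, u)}).edgeSet := by
      intro e' he'
      rw [edgeSet_deleteEdges]
      have hY := q.edges_subset_edgeSet he'
      rw [edgeSet_deleteEdges] at hY
      refine ⟨hY.1, ?_⟩
      intro hmem
      rw [Set.mem_singleton_iff] at hmem
      subst hmem
      exact hp.2 (q.snd_mem_support_of_mem_edges he')
    exact ⟨q.transfer _ hq1⟩

lemma order_le_bwidth (ends : E → Set V) (D : BranchDec E ι) [Fintype ι] {u w : ι}
    (huw : D.Y.Adj u w) :
    (edgeEnds ends (D.side u w) ∩ edgeEnds ends (D.side w u)).ncard ≤ D.bwidth ends := by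
  exact le_ciSup (f := fun p : {p : ι × ι // D.Y.Adj p.1 p.2} => D.order ends p.1.1 p.1.2)
    (Set.Finite.bddAbove (Set.finite_range _)) ⟨(u, w), huw⟩

lemma label_bound [Finite V] (ends : E → Set V) (D : BranchDec E ι) [Fintype ι]
    (X : Set V) {u w : ι} (huw : D.Y.Adj u w) {Z : Set V}
    (hZ : Z ⊆ (edgeEnds ends (D.side u w) ∩ edgeEnds ends ((D.side u w)ᶜ)) ∪ X) :
    Z.ncard ≤ D.bwidth ends + X.ncard := by
  calc Z.ncard
      ≤ ((edgeEnds ends (D.side u w) ∩ edgeEnds ends ((D.side u w)ᶜ)) ∪ X).ncard :=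
        Set.ncard_le_ncard hZ (Set.toFinite _)
    _ ≤ (edgeEnds ends (D.side u w) ∩ edgeEnds ends ((D.side u w)ᶜ)).ncard + X.ncard :=
        Set.ncard_union_le _ _
    _ ≤ D.bwidth ends + X.ncard := by
        rw [side_compl D huw]
        exact Nat.add_le_add_right (order_le_bwidth ends D huw) _

lemma main_construct [Finite V] [Fintype ι] (ends : E → Set V)
    (D : BranchDec E ι) (X : Set V) :
    ∀ n : ℕ, ∀ u w : ι, D.Y.Adj u w →
      ({x | (D.Y.deleteEdges {s(u, w)}).Reachable u x}).ncard ≤ n →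
      ∀ X' vs : Set V,
        X' ⊆ (edgeEnds ends (D.side u w) ∩ edgeEnds ends ((D.side u w)ᶜ)) ∪ X →
        edgeEnds ends (D.side u w) ⊆ vs → X' ⊆ vs →
        ∃ T : BT V E, IsRBD ends vs (D.side u w) X' T ∧
          T.width ≤ D.bwidth ends + X.ncard := by
  intro n
  induction n with
  | zero =>
    intro u w huw hm X' vs _ _ _
    exfalso
    have : 0 < ({x | (D.Y.deleteEdges {s(u, w)}).Reachable u x}).ncard :=
      (Set.ncard_pos (Set.toFinite _)).mpr ⟨u, Reachable.refl u⟩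
    omega
  | succ n ih =>
    intro u w huw hm X' vs hX' hvsA hvsX'
    have hX'card : X'.ncard ≤ D.bwidth ends + X.ncard := label_bound ends D X huw hX'
    by_cases hN : D.Y.neighborSet u = {w}
    · -- u is a leaf of the decomposition tree
      obtain ⟨e, he⟩ := side_leaf D huw hN
      refine ⟨BT.leaf vs (D.side u w) X', ⟨rfl, rfl, rfl, e, he⟩, ?_⟩
      simpa [BT.width] using hX'card
    · have hw1 : ∃ w1, D.Y.Adj u w1 ∧ w1 ≠ w := by
        by_contra hcon
        push_neg at hcon
        apply hN
        ext z
        simp only [mem_neighborSet, Set.mem_singleton_iff]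
        exact ⟨fun hz => hcon z hz, fun hz => hz ▸ huw⟩
      obtain ⟨w1, hadj1, hne1⟩ := hw1
      by_cases hsub : D.Y.neighborSet u ⊆ {w, w1}
      · -- u has degree two
        have hA : D.side u w = D.side w1 u := by
          apply Set.eq_of_subset_of_subset
          · intro e he
            obtain ⟨w', hadj', hne', hmem⟩ := side_step D huw hN he
            have hz : w' ∈ ({w, w1} : Set ι) := hsub hadj'
            simp only [Set.mem_insert_iff, Set.mem_singleton_iff] at hz
            rcases hz with rfl | rfl
            · exact absurd rfl hne'
            · exact hmem
          · exact side_subset D huw hadj1 hne1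
        have hlt := reach_lt D huw hadj1 hne1
        rw [hA] at hX' hvsA ⊢
        exact ih w1 u hadj1.symm (by omega) X' vs hX' hvsA hvsX'
      · -- u has degree three
        have hw2 : ∃ w2, w2 ∈ D.Y.neighborSet u ∧ w2 ∉ ({w, w1} : Set ι) := by
          by_contra hcon
          push_neg at hcon
          exact hsub hcon
        obtain ⟨w2, hmem2, hnotin2⟩ := hw2
        have hadj2 : D.Y.Adj u w2 := hmem2
        simp only [Set.mem_insert_iff, Set.mem_singleton_iff, not_or] at hnotin2
        obtain ⟨hne2w, hne2w1⟩ := hnotin2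
        have hNeq : ({w, w1, w2} : Set ι) = D.Y.neighborSet u := by
          apply Set.eq_of_subset_of_ncard_le
          · intro z hz
            simp only [Set.mem_insert_iff, Set.mem_singleton_iff] at hz
            rcases hz with rfl | rfl | rfl
            · exact huw
            · exact hadj1
            · exact hadj2
          · have h3 : ({w, w1, w2} : Set ι).ncard = 3 := by
              rw [Set.ncard_insert_of_notMem (by simp [hne1.symm, Ne.symm hne2w]),
                Set.ncard_insert_of_notMem (by simp [Ne.symm hne2w1]), Set.ncard_singleton]
            rw [h3]
            exact D.subcubic u
          · exact Set.toFinite _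
        have hA : D.side u w = D.side w1 u ∪ D.side w2 u := by
          apply Set.eq_of_subset_of_subset
          · intro e he
            obtain ⟨w', hadj', hne', hmem⟩ := side_step D huw hN he
            have hz : w' ∈ ({w, w1, w2} : Set ι) := by rw [hNeq]; exact hadj'
            simp only [Set.mem_insert_iff, Set.mem_singleton_iff] at hz
            rcases hz with rfl | rfl | rfl
            · exact absurd rfl hne'
            · exact Or.inl hmem
            · exact Or.inr hmem
          · exact Set.union_subset (side_subset D huw hadj1 hne1)
              (side_subset D huw hadj2 hne2w)
        have hdisj : D.side w1 u ∩ D.side w2 u = ∅ := by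
          have h1 : D.side w2 u ⊆ D.side u w1 := side_subset D hadj1 hadj2 hne2w1
          have h2 := side_inter_compl D hadj1
          ext e
          simp only [Set.mem_inter_iff, Set.mem_empty_iff_false, iff_false, not_and]
          intro he1 he2
          have hmm : e ∈ D.side u w1 ∩ D.side w1 u := ⟨h1 he2, he1⟩
          rw [h2] at hmm
          exact hmm
        have hA1sub : D.side w1 u ⊆ D.side u w := by rw [hA]; exact Set.subset_union_left
        have hA2sub : D.side w2 u ⊆ D.side u w := by rw [hA]; exact Set.subset_union_right
        have heA1vs : edgeEnds ends (D.side w1 u) ⊆ vs := (edgeEnds_mono ends hA1sub).trans hvsA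
        have heA2vs : edgeEnds ends (D.side w2 u) ⊆ vs := (edgeEnds_mono ends hA2sub).trans hvsA
        have hcompl21 : D.side w2 u ⊆ (D.side w1 u)ᶜ := by
          intro e he2 he1
          have hmm : e ∈ D.side w1 u ∩ D.side w2 u := ⟨he1, he2⟩
          rw [hdisj] at hmm
          exact hmm
        have hcompl12 : D.side w1 u ⊆ (D.side w2 u)ᶜ := by
          intro e he1 he2
          have hmm : e ∈ D.side w1 u ∩ D.side w2 u := ⟨he1, he2⟩
          rw [hdisj] at hmm
          exact hmm
        have hcomplA1 : (D.side u w)ᶜ ⊆ (D.side w1 u)ᶜ := Set.compl_subset_compl.mpr hA1sub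
        have hcomplA2 : (D.side u w)ᶜ ⊆ (D.side w2 u)ᶜ := Set.compl_subset_compl.mpr hA2sub
        -- the two vertex sets for the split
        have hcap : (((vs \ edgeEnds ends (D.side w2 u)) ∪ edgeEnds ends (D.side w1 u)) ∩
            edgeEnds ends (D.side w2 u)) =
            edgeEnds ends (D.side w1 u) ∩ edgeEnds ends (D.side w2 u) := by
          ext v
          simp only [Set.mem_inter_iff, Set.mem_union, Set.mem_diff]
          tauto
        have hX1sub : ((((vs \ edgeEnds ends (D.side w2 u)) ∪ edgeEnds ends (D.side w1 u)) ∩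
              edgeEnds ends (D.side w2 u)) ∪
              (X' ∩ ((vs \ edgeEnds ends (D.side w2 u)) ∪ edgeEnds ends (D.side w1 u)))) ⊆
            (edgeEnds ends (D.side w1 u) ∩ edgeEnds ends ((D.side w1 u)ᶜ)) ∪ X := by
          intro v hv
          rcases hv with hv | hv
          · rw [hcap] at hv
            exact Or.inl ⟨hv.1, edgeEnds_mono ends hcompl21 hv.2⟩
          · obtain ⟨hvX', hvvs1⟩ := hv
            rcases hX' hvX' with hvb | hvx
            · have hvA : v ∈ edgeEnds ends (D.side w1 u) ∪ edgeEnds ends (D.side w2 u) := by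
                rw [← edgeEnds_union, ← hA]
                exact hvb.1
              rcases hvA with h1 | h2
              · exact Or.inl ⟨h1, edgeEnds_mono ends hcomplA1 hvb.2⟩
              · rcases hvvs1 with hvd | hve
                · exact absurd h2 hvd.2
                · exact Or.inl ⟨hve, edgeEnds_mono ends hcomplA1 hvb.2⟩
            · exact Or.inr hvx
        have hX2sub : ((((vs \ edgeEnds ends (D.side w2 u)) ∪ edgeEnds ends (D.side w1 u)) ∩
              edgeEnds ends (D.side w2 u)) ∪ (X' ∩ edgeEnds ends (D.side w2 u))) ⊆
            (edgeEnds ends (D.side w2 u) ∩ edgeEnds ends ((D.side w2 u)ᶜ)) ∪ X := by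
          intro v hv
          rcases hv with hv | hv
          · rw [hcap] at hv
            exact Or.inl ⟨hv.2, edgeEnds_mono ends hcompl12 hv.1⟩
          · rcases hX' hv.1 with hvb | hvx
            · exact Or.inl ⟨hv.2, edgeEnds_mono ends hcomplA2 hvb.2⟩
            · exact Or.inr hvx
        have hlt1 := reach_lt D huw hadj1 hne1
        have hlt2 := reach_lt D huw hadj2 hne2w
        obtain ⟨T1, hT1, hwid1⟩ := ih w1 u hadj1.symm (by omega)
          ((((vs \ edgeEnds ends (D.side w2 u)) ∪ edgeEnds ends (D.side w1 u)) ∩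
            edgeEnds ends (D.side w2 u)) ∪
            (X' ∩ ((vs \ edgeEnds ends (D.side w2 u)) ∪ edgeEnds ends (D.side w1 u))))
          ((vs \ edgeEnds ends (D.side w2 u)) ∪ edgeEnds ends (D.side w1 u))
          hX1sub Set.subset_union_right
          (by
            intro v hv
            rcases hv with hv | hv
            · exact hv.1
            · exact hv.2)
        obtain ⟨T2, hT2, hwid2⟩ := ih w2 u hadj2.symm (by omega)
          ((((vs \ edgeEnds ends (D.side w2 u)) ∪ edgeEnds ends (D.side w1 u)) ∩
            edgeEnds ends (D.side w2 u)) ∪ (X' ∩ edgeEnds ends (D.side w2 u)))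
          (edgeEnds ends (D.side w2 u))
          hX2sub subset_rfl
          (by
            intro v hv
            rcases hv with hv | hv
            · exact hv.2
            · exact hv.2)
        refine ⟨BT.node T1 vs (D.side u w) X' T2, ?_, ?_⟩
        · refine ⟨rfl, rfl, rfl,
            (vs \ edgeEnds ends (D.side w2 u)) ∪ edgeEnds ends (D.side w1 u),
            edgeEnds ends (D.side w2 u), D.side w1 u, D.side w2 u,
            Set.union_subset Set.diff_subset heA1vs, heA2vs,
            fun e he => (ends_subset_edgeEnds ends he).trans Set.subset_union_right,
            fun e he => ends_subset_edgeEnds ends he,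
            hA.symm, hdisj, ?_, hT1, hT2⟩
          apply Set.eq_of_subset_of_subset
          · exact Set.union_subset (Set.union_subset Set.diff_subset heA1vs) heA2vs
          · intro v hv
            by_cases hve : v ∈ edgeEnds ends (D.side w2 u)
            · exact Or.inr hve
            · exact Or.inl (Or.inl ⟨hv, hve⟩)
        · show max X'.ncard (max T1.width T2.width) ≤ D.bwidth ends + X.ncard
          exact max_le hX'card (max_le hwid1 hwid2)

end Aux

/-- Every branch decomposition `(Y,b)` of `G` yields a recursive branch
decomposition of `(G,X)` of width at most `width(Y,b) + |X|`. -/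
theorem stmt6 {V E : Type} [Finite V] [Finite E]
    (ends : E → Set V) (hsmall : EndsSmall ends)
    (ι : Type) [Fintype ι] (D : BranchDec E ι) (X : Set V) :
    ∃ T : BT V E, IsRBD ends Set.univ Set.univ X T ∧
      T.width ≤ D.bwidth ends + X.ncard := by
  classical
  by_cases hE : Nonempty E
  · obtain ⟨e0⟩ := hE
    have hdeg : (D.Y.neighborSet (D.b.symm e0).1).ncard = 1 := (D.b.symm e0).2
    obtain ⟨w, hNw⟩ := Set.ncard_eq_one.mp hdeg
    set u := (D.b.symm e0).1 with hu
    have huw : D.Y.Adj u w := by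
      have hm : w ∈ D.Y.neighborSet u := by rw [hNw]; exact Set.mem_singleton _
      exact hm
    have hcompl : (D.side u w)ᶜ = D.side w u := side_compl D huw
    have hcompl' : (D.side w u)ᶜ = D.side u w := by rw [← hcompl, compl_compl]
    have hunion : D.side u w ∪ D.side w u = Set.univ := side_union_compl D huw
    have hdisj : D.side u w ∩ D.side w u = ∅ := side_inter_compl D huw
    have hcap : (((Set.univ \ edgeEnds ends (D.side w u)) ∪ edgeEnds ends (D.side u w)) ∩
        edgeEnds ends (D.side w u)) =
        edgeEnds ends (D.side u w) ∩ edgeEnds ends (D.side w u) := by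
      ext v
      simp only [Set.mem_inter_iff, Set.mem_union, Set.mem_diff, Set.mem_univ, true_and]
      tauto
    obtain ⟨T1, hT1, hwid1⟩ := main_construct ends D X
      ({x | (D.Y.deleteEdges {s(u, w)}).Reachable u x}).ncard u w huw le_rfl
      ((((Set.univ \ edgeEnds ends (D.side w u)) ∪ edgeEnds ends (D.side u w)) ∩
        edgeEnds ends (D.side w u)) ∪
        (X ∩ ((Set.univ \ edgeEnds ends (D.side w u)) ∪ edgeEnds ends (D.side u w))))
      ((Set.univ \ edgeEnds ends (D.side w u)) ∪ edgeEnds ends (D.side u w))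
      (by
        rw [hcompl]
        intro v hv
        rcases hv with hv | hv
        · rw [hcap] at hv
          exact Or.inl hv
        · exact Or.inr hv.1)
      Set.subset_union_right
      (by
        intro v hv
        rcases hv with hv | hv
        · exact hv.1
        · exact hv.2)
    obtain ⟨T2, hT2, hwid2⟩ := main_construct ends D X
      ({x | (D.Y.deleteEdges {s(w, u)}).Reachable w x}).ncard w u huw.symm le_rfl
      ((((Set.univ \ edgeEnds ends (D.side w u)) ∪ edgeEnds ends (D.side u w)) ∩
        edgeEnds ends (D.side w u)) ∪ (X ∩ edgeEnds ends (D.side w u)))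
      (edgeEnds ends (D.side w u))
      (by
        rw [hcompl']
        intro v hv
        rcases hv with hv | hv
        · rw [hcap] at hv
          exact Or.inl ⟨hv.2, hv.1⟩
        · exact Or.inr hv.1)
      subset_rfl
      (by
        intro v hv
        rcases hv with hv | hv
        · exact hv.2
        · exact hv.2)
    refine ⟨BT.node T1 Set.univ Set.univ X T2, ?_, ?_⟩
    · refine ⟨rfl, rfl, rfl,
        (Set.univ \ edgeEnds ends (D.side w u)) ∪ edgeEnds ends (D.side u w),
        edgeEnds ends (D.side w u), D.side u w, D.side w u,
        Set.subset_univ _, Set.subset_univ _,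
        fun e he => (ends_subset_edgeEnds ends he).trans Set.subset_union_right,
        fun e he => ends_subset_edgeEnds ends he,
        hunion, hdisj, ?_, hT1, hT2⟩
      apply Set.eq_univ_of_forall
      intro v
      by_cases hve : v ∈ edgeEnds ends (D.side w u)
      · exact Or.inr hve
      · exact Or.inl (Or.inl ⟨Set.mem_univ v, hve⟩)
    · show max X.ncard (max T1.width T2.width) ≤ D.bwidth ends + X.ncard
      exact max_le (Nat.le_add_left _ _) (max_le hwid1 hwid2)
  · refine ⟨BT.nil, ?_, Nat.zero_le _⟩
    show (Set.univ : Set E) = ∅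
    exact Set.univ_eq_empty_iff.mpr (not_nonempty_iff.mp hE)

end MWidth
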